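/- Let d ≥ 1, Nα ≥ 2, Nβ ≥ 1, N = Nα + Nβ, let X_1,…,X_N ⊆ ℝ^d be open sets, let p ∈ {1,…,Nβ}, and let u_1,…,u_N with u_i : X_i → ℝ satisfy the splitting inequality for the cost c. Fix x_1⁰ ∈ X_1 at which u_1 is differentiable, and define M := { (x_2,…,x_{Nα}, y_1,…,y_{Nβ}) ∈ X_2×…×X_N : u_{Nα+p} is differentiable at y_p and equality holds in the splitting inequality at (x_1⁰, x_2,…,x_{Nα}, y_1,…,y_{Nβ}) }. Then M contains at most one point; that is, if M is nonempty it is a singleton. -/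

import Mathlib

open MeasureTheory RealInnerProductSpace

noncomputable section

/-- The "starred" vector `y* = (-2 y¹, y², …, y^d)`. -/
def ystar {d : ℕ} (hd : 0 < d) (y : EuclideanSpace ℝ (Fin d)) : EuclideanSpace ℝ (Fin d) :=
  y - (3 * y ⟨0, hd⟩) • EuclideanSpace.single (⟨0, hd⟩ : Fin d) (1 : ℝ)

/-- The cost `c(x_1,…,x_Nα,y_1,…,y_Nβ) = ∑_i ∑_j x_i · y_j*`, in block coordinates. -/
def costxy {d Nα Nβ : ℕ} (hd : 0 < d)
    (x : Fin Nα → EuclideanSpace ℝ (Fin d)) (y : Fin Nβ → EuclideanSpace ℝ (Fin d)) : ℝ :=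
  ∑ i : Fin Nα, ∑ j : Fin Nβ, ⟪x i, ystar hd (y j)⟫

section Aux
variable {d : ℕ} (hd : 0 < d)

lemma ystar_apply0 (y : EuclideanSpace ℝ (Fin d)) :
    ystar hd y ⟨0, hd⟩ = -2 * y ⟨0, hd⟩ := by
  simp [ystar, PiLp.sub_apply, PiLp.smul_apply, EuclideanSpace.single_apply]
  ring

lemma ystar_inj {a b : EuclideanSpace ℝ (Fin d)} (h : ystar hd a = ystar hd b) : a = b := by
  have h0 : a ⟨0, hd⟩ = b ⟨0, hd⟩ := by
    have ha := ystar_apply0 hd a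
    have hb := ystar_apply0 hd b
    have := congrArg (fun v : EuclideanSpace ℝ (Fin d) => v ⟨0, hd⟩) h
    simp only at this
    rw [ha, hb] at this
    linarith
  unfold ystar at h
  rw [h0] at h
  exact sub_left_inj.mp h

lemma ystar_add (a b : EuclideanSpace ℝ (Fin d)) :
    ystar hd (a + b) = ystar hd a + ystar hd b := by
  unfold ystar
  have h0 : (a + b) ⟨0, hd⟩ = a ⟨0, hd⟩ + b ⟨0, hd⟩ := rfl
  rw [h0]
  module

lemma ystar_sub (a b : EuclideanSpace ℝ (Fin d)) :
    ystar hd (a - b) = ystar hd a - ystar hd b := by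
  unfold ystar
  have h0 : (a - b) ⟨0, hd⟩ = a ⟨0, hd⟩ - b ⟨0, hd⟩ := rfl
  rw [h0]
  module

lemma ystar_sum {ι : Type*} (s : Finset ι) (f : ι → EuclideanSpace ℝ (Fin d)) :
    ystar hd (∑ j ∈ s, f j) = ∑ j ∈ s, ystar hd (f j) := by
  induction s using Finset.cons_induction with
  | empty =>
      simp only [Finset.sum_empty]
      unfold ystar
      have h0 : (0 : EuclideanSpace ℝ (Fin d)) ⟨0, hd⟩ = 0 := rfl
      rw [h0]
      module
  | cons a s ha ih =>
      rw [Finset.sum_cons, Finset.sum_cons, ystar_add hd, ih]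

lemma inner_ystar (x y : EuclideanSpace ℝ (Fin d)) :
    ⟪x, ystar hd y⟫ = ⟪x, y⟫ - 3 * x ⟨0, hd⟩ * y ⟨0, hd⟩ := by
  unfold ystar
  rw [inner_sub_right, real_inner_smul_right, EuclideanSpace.inner_single_right]
  simp
  ring

lemma inner_ystar_comm (x y : EuclideanSpace ℝ (Fin d)) :
    ⟪x, ystar hd y⟫ = ⟪y, ystar hd x⟫ := by
  rw [inner_ystar, inner_ystar, real_inner_comm]
  ring

lemma innerSL_ystar_inj {a b : EuclideanSpace ℝ (Fin d)}
    (h : innerSL ℝ (ystar hd a) = innerSL ℝ (ystar hd b)) : a = b := by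
  refine ystar_inj hd (ext_inner_right ℝ fun v => ?_)
  have := DFunLike.congr_fun h v
  simpa [innerSL_apply_apply] using this

lemma cost_sum {Nα Nβ : ℕ} (x : Fin Nα → EuclideanSpace ℝ (Fin d))
    (y : Fin Nβ → EuclideanSpace ℝ (Fin d)) :
    costxy hd x y = ⟪∑ i, x i, ystar hd (∑ j, y j)⟫ := by
  unfold costxy
  rw [sum_inner]
  refine Finset.sum_congr rfl fun i _ => ?_
  rw [ystar_sum hd, inner_sum]

lemma key_grad {f : EuclideanSpace ℝ (Fin d) → ℝ} {a : EuclideanSpace ℝ (Fin d)}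
    {U : Set (EuclideanSpace ℝ (Fin d))} (hU : IsOpen U) (ha : a ∈ U)
    (hf : DifferentiableAt ℝ f a) (w : EuclideanSpace ℝ (Fin d))
    (hle : ∀ z ∈ U, f z ≤ f a + ⟪w, z - a⟫) :
    fderiv ℝ f a = innerSL ℝ w := by
  have hinner : (fun z : EuclideanSpace ℝ (Fin d) => ⟪w, z⟫) = innerSL ℝ w := by
    funext z; simp [innerSL_apply_apply]
  have hw : DifferentiableAt ℝ (fun z : EuclideanSpace ℝ (Fin d) => ⟪w, z⟫) a := by
    rw [hinner]; exact (innerSL ℝ w).differentiableAt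
  have hmax : IsLocalMax (fun z => f z - ⟪w, z⟫) a := by
    filter_upwards [hU.mem_nhds ha] with z hz
    have h1 := hle z hz
    rw [inner_sub_right] at h1
    show f z - ⟪w, z⟫ ≤ f a - ⟪w, a⟫
    linarith
  have h0 : fderiv ℝ (fun z => f z - ⟪w, z⟫) a = 0 := hmax.fderiv_eq_zero
  rw [fderiv_fun_sub hf hw, hinner, (innerSL ℝ w).fderiv] at h0
  exact sub_eq_zero.mp h0

lemma sumf_update {n : ℕ} {E' : Type*} [DecidableEq (Fin n)] (f : Fin n → E' → ℝ)
    (x : Fin n → E') (k : Fin n) (z : E') :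
    ∑ i, f i (Function.update x k z i) = ∑ i, f i (x i) + (f k z - f k (x k)) := by
  have h : ∀ i, f i (Function.update x k z i)
      = Function.update (fun i => f i (x i)) k (f k z) i := by
    intro i
    rcases eq_or_ne i k with rfl | hne
    · simp
    · simp [Function.update_of_ne hne]
  rw [Finset.sum_congr rfl fun i _ => h i,
    Finset.sum_update_of_mem (Finset.mem_univ k),
    Finset.sum_sdiff_eq_sub (Finset.subset_univ {k}), Finset.sum_singleton]
  ring

lemma sumv_update {n : ℕ} {M : Type*} [AddCommGroup M] [DecidableEq (Fin n)]
    (x : Fin n → M) (k : Fin n) (z : M) :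
    ∑ i, Function.update x k z i = ∑ i, x i + (z - x k) := by
  rw [Finset.sum_update_of_mem (Finset.mem_univ k),
    Finset.sum_sdiff_eq_sub (Finset.subset_univ {k}), Finset.sum_singleton]
  abel

lemma update_mem {n : ℕ} {E' : Type*} {X : Fin n → Set E'} {x : Fin n → E'}
    (hx : ∀ i, x i ∈ X i) {k : Fin n} {z : E'} (hz : z ∈ X k) :
    ∀ i, Function.update x k z i ∈ X i := by
  intro i
  rcases eq_or_ne i k with rfl | h
  · simpa using hz
  · simpa [Function.update_of_ne h] using hx i

end Aux

theorem stmt_11 {d Nα Nβ : ℕ} (hd : 0 < d) (hNα : 2 ≤ Nα) (hNβ : 0 < Nβ)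
    (Xa : Fin Nα → Set (EuclideanSpace ℝ (Fin d)))
    (Xb : Fin Nβ → Set (EuclideanSpace ℝ (Fin d)))
    (hXa : ∀ i, IsOpen (Xa i)) (hXb : ∀ j, IsOpen (Xb j))
    (p : Fin Nβ)
    (ua : Fin Nα → EuclideanSpace ℝ (Fin d) → ℝ)
    (ub : Fin Nβ → EuclideanSpace ℝ (Fin d) → ℝ)
    (hsplit : ∀ (x : Fin Nα → EuclideanSpace ℝ (Fin d))
        (y : Fin Nβ → EuclideanSpace ℝ (Fin d)),
        (∀ i, x i ∈ Xa i) → (∀ j, y j ∈ Xb j) →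
        ∑ i, ua i (x i) + ∑ j, ub j (y j) ≤ costxy hd x y)
    (x10 : EuclideanSpace ℝ (Fin d)) (hx10 : x10 ∈ Xa ⟨0, by omega⟩)
    (hdiff : DifferentiableAt ℝ (ua ⟨0, by omega⟩) x10) :
    Set.Subsingleton
      {q : (Fin Nα → EuclideanSpace ℝ (Fin d)) × (Fin Nβ → EuclideanSpace ℝ (Fin d)) |
        q.1 ⟨0, by omega⟩ = x10 ∧ (∀ i, q.1 i ∈ Xa i) ∧ (∀ j, q.2 j ∈ Xb j) ∧
        DifferentiableAt ℝ (ub p) (q.2 p) ∧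
        ∑ i, ua i (q.1 i) + ∑ j, ub j (q.2 j) = costxy hd q.1 q.2} := by
  have hα0 : 0 < Nα := by omega
  intro q hq q' hq'
  obtain ⟨x, yv⟩ := q
  obtain ⟨x', y'⟩ := q'
  simp only [Set.mem_setOf_eq] at hq hq'
  obtain ⟨hx0, hxm, hym, hdp, heq⟩ := hq
  obtain ⟨hx0', hxm', hym', hdp', heq'⟩ := hq'
  rw [cost_sum hd] at heq heq'
  -- Claim A: gradient of ua 0 at x10 determines ∑ y
  have hA : ∀ (xx : Fin Nα → EuclideanSpace ℝ (Fin d))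
      (yy : Fin Nβ → EuclideanSpace ℝ (Fin d)),
      xx ⟨0, hα0⟩ = x10 → (∀ i, xx i ∈ Xa i) → (∀ j, yy j ∈ Xb j) →
      (∑ i, ua i (xx i) + ∑ j, ub j (yy j) = ⟪∑ i, xx i, ystar hd (∑ j, yy j)⟫) →
      fderiv ℝ (ua ⟨0, hα0⟩) x10 = innerSL ℝ (ystar hd (∑ j, yy j)) := by
    intro xx yy h0 hxmm hymm heqq
    refine key_grad (hXa ⟨0, hα0⟩) (h0 ▸ hxmm ⟨0, hα0⟩) hdiff _ ?_
    intro z hz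
    have h1 := hsplit (Function.update xx ⟨0, hα0⟩ z) yy (update_mem hxmm hz) hymm
    rw [cost_sum hd, sumf_update, sumv_update, inner_add_left] at h1
    rw [h0] at h1
    have hc : ⟪z - x10, ystar hd (∑ j, yy j)⟫
        = ⟪ystar hd (∑ j, yy j), z - x10⟫ := real_inner_comm _ _
    linarith
  -- Claim C: gradient of ub p at yy p determines ∑ x
  have hC : ∀ (xx : Fin Nα → EuclideanSpace ℝ (Fin d))
      (yy : Fin Nβ → EuclideanSpace ℝ (Fin d)),
      (∀ i, xx i ∈ Xa i) → (∀ j, yy j ∈ Xb j) →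
      (∑ i, ua i (xx i) + ∑ j, ub j (yy j) = ⟪∑ i, xx i, ystar hd (∑ j, yy j)⟫) →
      DifferentiableAt ℝ (ub p) (yy p) →
      fderiv ℝ (ub p) (yy p) = innerSL ℝ (ystar hd (∑ i, xx i)) := by
    intro xx yy hxmm hymm heqq hdf
    refine key_grad (hXb p) (hymm p) hdf _ ?_
    intro w hw
    have h1 := hsplit xx (Function.update yy p w) hxmm (update_mem hymm hw)
    rw [cost_sum hd, sumf_update, sumv_update, ystar_add hd, inner_add_right,
      ystar_sub hd, inner_sub_right] at h1
    have c1 := inner_ystar_comm hd (∑ i, xx i) w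
    have c2 := inner_ystar_comm hd (∑ i, xx i) (yy p)
    have c3 : ⟪ystar hd (∑ i, xx i), w - yy p⟫
        = ⟪w, ystar hd (∑ i, xx i)⟫ - ⟪yy p, ystar hd (∑ i, xx i)⟫ := by
      rw [real_inner_comm, inner_sub_left]
    linarith
  have hg1 := hA x yv hx0 hxm hym heq
  have hg1' := hA x' y' hx0' hxm' hym' heq'
  have hS : ∑ j, yv j = ∑ j, y' j := innerSL_ystar_inj hd (hg1.symm.trans hg1')
  -- x-coordinates agree
  have hxeq : ∀ i, x i = x' i := by
    intro i
    have h1 := hsplit (Function.update x i (x' i)) yv (update_mem hxm (hxm' i)) hym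
    have h2 := hsplit (Function.update x' i (x i)) y' (update_mem hxm' (hxm i)) hym'
    rw [cost_sum hd, sumf_update, sumv_update, inner_add_left] at h1 h2
    rw [← hS] at h2 heq'
    have e1 : ⟪x i - x' i, ystar hd (∑ j, yv j)⟫
        = -⟪x' i - x i, ystar hd (∑ j, yv j)⟫ := by
      rw [← inner_neg_left, neg_sub]
    have hmixeq : ∑ k, ua k (Function.update x i (x' i) k) + ∑ j, ub j (yv j)
        = ⟪∑ k, Function.update x i (x' i) k, ystar hd (∑ j, yv j)⟫ := by
      rw [sumf_update, sumv_update, inner_add_left]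
      linarith
    have hcx := hC (Function.update x i (x' i)) yv (update_mem hxm (hxm' i)) hym hmixeq hdp
    have hcx0 := hC x yv hxm hym heq hdp
    have hXX := innerSL_ystar_inj hd (hcx0.symm.trans hcx)
    rw [sumv_update] at hXX
    have h3 : x' i - x i = 0 := left_eq_add.mp hXX
    exact (sub_eq_zero.mp h3).symm
  have hX : ∑ i, x i = ∑ i, x' i := Finset.sum_congr rfl fun i _ => hxeq i
  -- y-coordinates agree
  have hyeq : ∀ j, yv j = y' j := by
    intro j
    have h1 := hsplit x (Function.update yv j (y' j)) hxm (update_mem hym (hym' j))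
    have h2 := hsplit x' (Function.update y' j (yv j)) hxm' (update_mem hym' (hym j))
    rw [cost_sum hd, sumf_update, sumv_update, ystar_add hd, inner_add_right,
      ystar_sub hd, inner_sub_right] at h1 h2
    rw [← hX] at h2 heq'
    have hmixeq : ∑ i, ua i (x i) + ∑ k, ub k (Function.update yv j (y' j) k)
        = ⟪∑ i, x i, ystar hd (∑ k, Function.update yv j (y' j) k)⟫ := by
      rw [sumf_update, sumv_update, ystar_add hd, inner_add_right,
        ystar_sub hd, inner_sub_right]
      linarith
    have hg2 := hA x (Function.update yv j (y' j)) hx0 hxm (update_mem hym (hym' j)) hmixeq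
    have hSS := innerSL_ystar_inj hd (hg1.symm.trans hg2)
    rw [sumv_update] at hSS
    have h3 : y' j - yv j = 0 := left_eq_add.mp hSS
    exact (sub_eq_zero.mp h3).symm
  simp only [Prod.mk.injEq]
  exact ⟨funext hxeq, funext hyeq⟩
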